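/- Let d ≥ 1, let U be a d×d real matrix with all entries U_{jk} ≥ 0, let ρ ∈ ℝ^d with all entries ρ_k ≥ 0 and |Uρ| > 0 (ℓ¹-norm), and let c ∈ ℝ^d. Then Σ_i | Σ_{j,k} ((δ_{ij} − (Uρ)^i/|Uρ|)/|Uρ|) U_{jk} c_k ρ_k | ≤ d · max_k |c_k| / 1, i.e. the ℓ¹-norm of the vector with i-th component Σ_{j,k} (δ_{ij} − (Uρ)^i/|Uρ|) U_{jk} c_k ρ_k / |Uρ| is at most d max_k |c_k|. -/
import Mathlib


open Matrix

/-- Key bound in the proof of Lemma B.3: the Skorokhod integrand built from the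
Jacobian of the normalization map and nonnegative Zakai propagators is bounded
by d times the sup-norm of c. -/
theorem normalization_jacobian_integrand_bound
    (d : ℕ) (hd : 1 ≤ d)
    (U : Matrix (Fin d) (Fin d) ℝ) (hU : ∀ j k, 0 ≤ U j k)
    (ρ : Fin d → ℝ) (hρ : ∀ k, 0 ≤ ρ k)
    (N : ℝ) (hNdef : N = ∑ i, |(U *ᵥ ρ) i|) (hN : 0 < N)
    (c : Fin d → ℝ) :
    ∑ i, |∑ j, ∑ k,
        ((if i = j then (1 : ℝ) else 0) - (U *ᵥ ρ) i / N) * U j k * c k * ρ k / N| ≤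
      d * ⨆ k : Fin d, |c k| := by
  haveI : Nonempty (Fin d) := ⟨⟨0, hd⟩⟩
  set M := ⨆ k : Fin d, |c k| with hM
  have hcM : ∀ k, |c k| ≤ M := fun k => le_ciSup (f := fun k => |c k|) (Set.Finite.bddAbove (Set.finite_range _)) k
  have hM0 : 0 ≤ M := le_trans (abs_nonneg _) (hcM (Classical.arbitrary _))
  have hv : ∀ i, 0 ≤ (U *ᵥ ρ) i := by
    intro i
    rw [Matrix.mulVec, dotProduct]
    exact Finset.sum_nonneg fun k _ => mul_nonneg (hU i k) (hρ k)
  have hNsum : N = ∑ i, (U *ᵥ ρ) i := by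
    rw [hNdef]; exact Finset.sum_congr rfl fun i _ => abs_of_nonneg (hv i)
  have key : ∀ i : Fin d,
      |∑ j, ∑ k, ((if i = j then (1 : ℝ) else 0) - (U *ᵥ ρ) i / N) * U j k * c k * ρ k / N|
        ≤ M := by
    intro i
    have hfrac1 : ∀ j : Fin d,
        |(if i = j then (1:ℝ) else 0) - (U *ᵥ ρ) i / N| ≤ 1 := by
      intro j
      have h1 : (U *ᵥ ρ) i / N ≤ 1 := by
        rw [div_le_one hN, hNsum]
        exact Finset.single_le_sum (fun k _ => hv k) (Finset.mem_univ i)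
      have h2 : 0 ≤ (U *ᵥ ρ) i / N := div_nonneg (hv i) hN.le
      rw [abs_le]
      constructor <;> split <;> linarith
    calc |∑ j, ∑ k, ((if i = j then (1:ℝ) else 0) - (U *ᵥ ρ) i / N) * U j k * c k * ρ k / N|
        ≤ ∑ j, ∑ k, |((if i = j then (1:ℝ) else 0) - (U *ᵥ ρ) i / N) * U j k * c k * ρ k / N| := by
          refine (Finset.abs_sum_le_sum_abs _ _).trans ?_
          exact Finset.sum_le_sum fun j _ => Finset.abs_sum_le_sum_abs _ _
      _ ≤ ∑ j, ∑ k, U j k * ρ k * M / N := by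
          refine Finset.sum_le_sum fun j _ => Finset.sum_le_sum fun k _ => ?_
          rw [abs_div, abs_of_pos hN, div_le_div_iff_of_pos_right hN]
          calc |((if i = j then (1:ℝ) else 0) - (U *ᵥ ρ) i / N) * U j k * c k * ρ k|
              = |(if i = j then (1:ℝ) else 0) - (U *ᵥ ρ) i / N| * U j k * |c k| * ρ k := by
                rw [abs_mul, abs_mul, abs_mul, abs_of_nonneg (hU j k), abs_of_nonneg (hρ k)]
            _ ≤ 1 * U j k * M * ρ k := by
                gcongr <;>
                  first
                  | exact hfrac1 j
                  | exact hcM k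
                  | exact hU j k
                  | exact hρ k
                  | exact mul_nonneg (by norm_num) (hU j k)
            _ = U j k * ρ k * M := by ring
      _ = M := by
          have : ∑ j, ∑ k, U j k * ρ k * M / N = (∑ j, (U *ᵥ ρ) j) * M / N := by
            rw [Finset.sum_mul, Finset.sum_div]
            refine Finset.sum_congr rfl fun j _ => ?_
            rw [Matrix.mulVec, dotProduct, Finset.sum_mul, Finset.sum_div]
          rw [this, ← hNsum]
          field_simp
  calc ∑ i, |∑ j, ∑ k, ((if i = j then (1:ℝ) else 0) - (U *ᵥ ρ) i / N) * U j k * c k * ρ k / N|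
      ≤ ∑ _i : Fin d, M := Finset.sum_le_sum fun i _ => key i
    _ = d * M := by simp [mul_comm]
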